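/- Let h(y) = y²/Ψ(y) for y > 0, where Ψ(y)=αy²-y³/3 on (0,α) and Ψ(y)=(2/3)α³+α²(y-α)+(y-α)³ on [α,∞). Then h'(y) = y(2Ψ(y)-yΨ'(y))/Ψ(y)², and h attains its unique maximum on (0,∞) at B = (4/√3)cos(5π/18)·α, with (B - y)·h'(y) > 0 for all y > 0, y ≠ B. -/

import Mathlib

noncomputable def Psi (α y : ℝ) : ℝ :=
  if y < α then α * y ^ 2 - y ^ 3 / 3
  else (2 / 3) * α ^ 3 + α ^ 2 * (y - α) + (y - α) ^ 3

noncomputable def Psi' (α y : ℝ) : ℝ :=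
  if y < α then 2 * α * y - y ^ 2 else α ^ 2 + 3 * (y - α) ^ 2

lemma psi_pos (α : ℝ) (hα : 0 < α) (y : ℝ) (hy : 0 < y) : 0 < Psi α y := by
  unfold Psi
  split_ifs with h
  · nlinarith [mul_pos (mul_pos hy hy) (show (0:ℝ) < α - y/3 by linarith)]
  · push_neg at h
    nlinarith [pow_nonneg (sub_nonneg.2 h) 3, pow_pos hα 3]

lemma psi_hasDeriv (α : ℝ) (y : ℝ) : HasDerivAt (Psi α) (Psi' α y) y := by
  have hf : ∀ x : ℝ, HasDerivAt (fun y : ℝ => α * y ^ 2 - y ^ 3 / 3) (2*α*x - x^2) x := by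
    intro x
    have := ((hasDerivAt_pow 2 x).const_mul α).sub ((hasDerivAt_pow 3 x).div_const 3)
    refine this.congr_deriv ?_
    push_cast; ring
  have hg : ∀ x : ℝ, HasDerivAt (fun y : ℝ => (2/3)*α^3 + α^2*(y-α) + (y-α)^3)
      (α^2 + 3*(x-α)^2) x := by
    intro x
    have h1 : HasDerivAt (fun y : ℝ => y - α) 1 x := (hasDerivAt_id x).sub_const α
    have := ((h1.const_mul (α^2)).const_add ((2/3)*α^3)).add (h1.pow 3)
    refine this.congr_deriv ?_
    push_cast; ring
  rcases lt_trichotomy y α with hy | hy | hy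
  · have heq : Psi α =ᶠ[nhds y] (fun y : ℝ => α * y ^ 2 - y ^ 3 / 3) := by
      filter_upwards [Iio_mem_nhds hy] with x hx
      simp [Psi, Set.mem_Iio.1 hx]
    have hv : Psi' α y = 2*α*y - y^2 := by simp [Psi', hy]
    rw [hv]
    exact (hf y).congr_of_eventuallyEq heq
  · rw [hy]
    have hval : Psi' α α = α^2 := by simp [Psi']
    rw [hval]
    have heq0 : Psi α α = α * α^2 - α^3/3 := by
      simp only [Psi, lt_self_iff_false, if_false]; ring
    have h1 : HasDerivWithinAt (Psi α) (α^2) (Set.Iic α) α := by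
      have hbase : HasDerivWithinAt (fun y : ℝ => α * y ^ 2 - y ^ 3 / 3)
          (α^2) (Set.Iic α) α := by
        have := (hf α).hasDerivWithinAt (s := Set.Iic α)
        refine this.congr_deriv ?_; ring
      refine hbase.congr (fun x hx => ?_) heq0
      rcases eq_or_lt_of_le (Set.mem_Iic.1 hx) with h | h
      · rw [← h] at heq0 ⊢; exact heq0
      · simp only [Psi, if_pos h]
    have h2 : HasDerivWithinAt (Psi α) (α^2) (Set.Ici α) α := by
      have hbase : HasDerivWithinAt (fun y : ℝ => (2/3)*α^3 + α^2*(y-α) + (y-α)^3)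
          (α^2) (Set.Ici α) α := by
        have := (hg α).hasDerivWithinAt (s := Set.Ici α)
        refine this.congr_deriv ?_; ring
      refine hbase.congr (fun x hx => ?_) ?_
      · simp only [Psi, if_neg (not_lt.2 (Set.mem_Ici.1 hx))]
      · simp only [Psi, lt_self_iff_false, if_false]
    have h3 := h1.union h2
    rw [Set.Iic_union_Ici] at h3
    exact hasDerivWithinAt_univ.mp h3
  · have heq : Psi α =ᶠ[nhds y] (fun y : ℝ => (2/3)*α^3 + α^2*(y-α) + (y-α)^3) := by
      filter_upwards [Ioi_mem_nhds hy] with x hx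
      simp [Psi, not_lt.2 (le_of_lt (Set.mem_Ioi.1 hx))]
    have hv : Psi' α y = α^2 + 3*(y-α)^2 := by simp [Psi', not_lt.2 hy.le]
    rw [hv]
    exact (hg y).congr_of_eventuallyEq heq

lemma cos_cubic : 4 * Real.cos (5*Real.pi/18)^3 - 3 * Real.cos (5*Real.pi/18)
    = -(Real.sqrt 3/2) := by
  have h := Real.cos_three_mul (5*Real.pi/18)
  have h2 : 3*(5*Real.pi/18) = Real.pi - Real.pi/6 := by ring
  rw [h2, Real.cos_pi_sub, Real.cos_pi_div_six] at h
  linarith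

lemma c_cubic : ((4/Real.sqrt 3)*Real.cos (5*Real.pi/18))^3
    - 4*((4/Real.sqrt 3)*Real.cos (5*Real.pi/18)) + 8/3 = 0 := by
  set s := Real.sqrt 3 with hsdef
  set k := Real.cos (5*Real.pi/18) with hkdef
  have hs0 : 0 < s := Real.sqrt_pos.2 (by norm_num)
  have hs2 : s^2 = 3 := Real.sq_sqrt (by norm_num)
  have hk := cos_cubic
  rw [← hsdef, ← hkdef] at hk
  have hc : 4/s*k = (4/3)*k*s := by
    rw [div_mul_eq_mul_div, div_eq_iff (ne_of_gt hs0)]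
    linear_combination (-(4:ℝ)/3)*k*hs2
  rw [hc]
  linear_combination ((64/27)*k^3*s - 8/9)*hs2 + ((16/9)*s)*hk

lemma B_gt_alpha (α : ℝ) (hα : 0 < α) :
    α < (4/Real.sqrt 3)*Real.cos (5*Real.pi/18)*α := by
  have hs0 : 0 < Real.sqrt 3 := Real.sqrt_pos.2 (by norm_num)
  have hs2 : (Real.sqrt 3)^2 = 3 := Real.sq_sqrt (by norm_num)
  have hslt : Real.sqrt 3 < 2 := by nlinarith
  have hk2 : 1/2 < Real.cos (5*Real.pi/18) := by
    have hpi := Real.pi_pos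
    have := Real.cos_lt_cos_of_nonneg_of_le_pi
      (show (0:ℝ) ≤ 5*Real.pi/18 by linarith)
      (show Real.pi/3 ≤ Real.pi by linarith)
      (show 5*Real.pi/18 < Real.pi/3 by linarith)
    rw [Real.cos_pi_div_three] at this
    exact this
  have h1 : 1 < (4/Real.sqrt 3)*Real.cos (5*Real.pi/18) := by
    rw [div_mul_eq_mul_div, lt_div_iff₀ hs0]
    nlinarith
  nlinarith

lemma G_key (α : ℝ) (hα : 0 < α) (y : ℝ) (hy : 0 < y)
    (hyB : y ≠ (4/Real.sqrt 3)*Real.cos (5*Real.pi/18)*α) :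
    0 < ((4/Real.sqrt 3)*Real.cos (5*Real.pi/18)*α - y)
        * (2*Psi α y - y*Psi' α y) := by
  set B := (4/Real.sqrt 3)*Real.cos (5*Real.pi/18)*α with hBdef
  have hB : α < B := B_gt_alpha α hα
  have hp : (B-α)^3 + 3*α*(B-α)^2 - α^2*(B-α) - α^3/3 = 0 := by
    have h3 := c_cubic
    rw [hBdef]
    linear_combination (α^3) * h3
  have hC : 0 < (B-α)^2 + 3*α*(B-α) - α^2 := by
    by_contra hcon
    push_neg at hcon
    have htB : 0 < B - α := by linarith
    have hprod := mul_nonneg htB.le (neg_nonneg.2 hcon)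
    nlinarith [pow_pos hα 3]
  rcases lt_or_ge y α with h | h
  · have hG : 2*Psi α y - y*Psi' α y = y^3/3 := by
      simp only [Psi, Psi', if_pos h]; ring
    rw [hG]
    exact mul_pos (by linarith) (by positivity)
  · have hG : 2*Psi α y - y*Psi' α y
        = (B - y)*((y-α)^2 + ((B-α)+3*α)*(y-α) + ((B-α)^2+3*α*(B-α)-α^2)) := by
      simp only [Psi, Psi', if_neg (not_lt.2 h)]
      linear_combination (-1 : ℝ)*hp
    rw [hG]
    have h1 : 0 ≤ y - α := by linarith
    have hQ : 0 < (y-α)^2 + ((B-α)+3*α)*(y-α) + ((B-α)^2+3*α*(B-α)-α^2) := by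
      nlinarith [sq_nonneg (y-α), mul_nonneg (show (0:ℝ) ≤ (B-α)+3*α by linarith) h1]
    have hne : B - y ≠ 0 := sub_ne_zero.2 (Ne.symm hyB)
    have h2 : 0 < (B-y)^2 := pow_two_pos_of_ne_zero hne
    calc (0:ℝ) < (B-y)^2 * ((y-α)^2 + ((B-α)+3*α)*(y-α) + ((B-α)^2+3*α*(B-α)-α^2)) :=
          mul_pos h2 hQ
      _ = (B - y) * ((B - y)*((y-α)^2 + ((B-α)+3*α)*(y-α) + ((B-α)^2+3*α*(B-α)-α^2))) := by
          ring

theorem stmt18 (α : ℝ) (hα : 0 < α) :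
    let B : ℝ := (4 / Real.sqrt 3) * Real.cos (5 * Real.pi / 18) * α
    let h : ℝ → ℝ := fun y => y ^ 2 / Psi α y
    (∀ y : ℝ, 0 < y →
      HasDerivAt h (y * (2 * Psi α y - y * Psi' α y) / (Psi α y) ^ 2) y) ∧
    (∀ y : ℝ, 0 < y → y ≠ B → h y < h B) ∧
    (∀ y : ℝ, 0 < y → y ≠ B →
      0 < (B - y) * (y * (2 * Psi α y - y * Psi' α y) / (Psi α y) ^ 2)) := by
  intro B h
  have hBa : α < B := B_gt_alpha α hα
  have hB0 : 0 < B := lt_trans hα hBa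
  have hd : ∀ y : ℝ, 0 < y →
      HasDerivAt h (y * (2 * Psi α y - y * Psi' α y) / (Psi α y) ^ 2) y := by
    intro y hy
    have hΨ := psi_pos α hα y hy
    have hdd := (hasDerivAt_pow 2 y).div (psi_hasDeriv α y) (ne_of_gt hΨ)
    refine hdd.congr_deriv ?_
    push_cast
    ring
  have key : ∀ y : ℝ, 0 < y → y ≠ B → 0 < (B - y) * (2*Psi α y - y*Psi' α y) :=
    fun y hy hyB => G_key α hα y hy hyB
  refine ⟨hd, ?_, ?_⟩
  · -- maximum
    have hmono : StrictMonoOn h (Set.Ioc 0 B) := by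
      apply strictMonoOn_of_deriv_pos (convex_Ioc 0 B)
      · exact fun x hx => ((hd x hx.1).continuousAt).continuousWithinAt
      · intro x hx
        rw [interior_Ioc] at hx
        rw [(hd x hx.1).deriv]
        have hΨ := psi_pos α hα x hx.1
        have hBx : 0 < B - x := by linarith [hx.2]
        have hG : 0 < 2*Psi α x - x*Psi' α x := by
          nlinarith [key x hx.1 (ne_of_lt hx.2)]
        exact div_pos (mul_pos hx.1 hG) (pow_pos hΨ 2)
    have hanti : StrictAntiOn h (Set.Ici B) := by
      apply strictAntiOn_of_deriv_neg (convex_Ici B)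
      · exact fun x hx => ((hd x (lt_of_lt_of_le hB0 hx)).continuousAt).continuousWithinAt
      · intro x hx
        rw [interior_Ici] at hx
        have hx0 : 0 < x := lt_trans hB0 (Set.mem_Ioi.1 hx)
        rw [(hd x hx0).deriv]
        have hΨ := psi_pos α hα x hx0
        have hBx : B - x < 0 := by linarith [Set.mem_Ioi.1 hx]
        have hG : 2*Psi α x - x*Psi' α x < 0 := by
          nlinarith [key x hx0 (ne_of_gt (Set.mem_Ioi.1 hx))]
        exact div_neg_of_neg_of_pos (mul_neg_of_pos_of_neg hx0 hG) (pow_pos hΨ 2)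
    intro y hy hyB
    rcases lt_or_gt_of_ne hyB with hlt | hgt
    · exact hmono ⟨hy, hlt.le⟩ ⟨hB0, le_rfl⟩ hlt
    · exact hanti (Set.mem_Ici.2 le_rfl) (Set.mem_Ici.2 hgt.le) hgt
  · intro y hy hyB
    have hΨ := psi_pos α hα y hy
    have hkey := key y hy hyB
    have heq : (B - y) * (y * (2 * Psi α y - y * Psi' α y) / (Psi α y) ^ 2)
        = ((B - y) * (2*Psi α y - y*Psi' α y)) * y / (Psi α y)^2 := by ring
    rw [heq]
    exact div_pos (mul_pos hkey hy) (pow_pos hΨ 2)
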